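/- Define S2(x,n,j) = Σ_{k=2}^{n} P(k)·x_{j+k}·(1−x_{j+k−1})·∏_{m=j−2}^{j+k−2} x_m + Σ_{k=2}^{n} P(k+1)·(1−x_{j+k})·(1−x_{j+k−1})·∏_{m=j−2}^{j+k−2} x_m, where P(k)=1 if k is even, 0 otherwise. Let x ∈ {0,1}^ℤ and y = F156(x). Then S2(y,n,j) = S2(x,n+1,j) − x_{j−2}·x_{j−1}·x_j·(1−x_{j+1})·x_{j+2}. -/

import Mathlib

/-- Polynomial form of the local function of rule 156. -/
def f156 (a b c : ℤ) : ℤ := (1 - a) * b + a * b * c + a * (1 - b) * (1 - c)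

/-- Even-parity indicator: 1 if k is even, 0 if k is odd. -/
def Par (k : ℕ) : ℤ := if Even k then 1 else 0

/-- Vertical strips under solid triangles. -/
noncomputable def S2 (x : ℤ → ℤ) (n : ℕ) (j : ℤ) : ℤ :=
  (∑ k ∈ Finset.Icc 2 n,
      Par k * x (j + k) * (1 - x (j + k - 1)) * ∏ m ∈ Finset.Icc (j - 2) (j + k - 2), x m) +
    ∑ k ∈ Finset.Icc 2 n,
      Par (k + 1) * (1 - x (j + k)) * (1 - x (j + k - 1)) *
        ∏ m ∈ Finset.Icc (j - 2) (j + k - 2), x m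

lemma prod3 (z : ℤ → ℤ) (j : ℤ) :
    ∏ m ∈ Finset.Icc (j - 2) j, z m = z (j - 2) * z (j - 1) * z j := by
  have h : Finset.Icc (j - 2) j = {j - 2, j - 1, j} := by
    ext m; simp only [Finset.mem_Icc, Finset.mem_insert, Finset.mem_singleton]; omega
  rw [h, Finset.prod_insert (by simp only [Finset.mem_insert, Finset.mem_singleton]; omega),
    Finset.prod_insert (by simp only [Finset.mem_singleton]; omega), Finset.prod_singleton]
  ring

lemma prod4 (z : ℤ → ℤ) (j : ℤ) :
    ∏ m ∈ Finset.Icc (j - 2) (j + 1), z m = z (j - 2) * z (j - 1) * z j * z (j + 1) := by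
  have h : Finset.Icc (j - 2) (j + 1) = {j - 2, j - 1, j, j + 1} := by
    ext m; simp only [Finset.mem_Icc, Finset.mem_insert, Finset.mem_singleton]; omega
  rw [h, Finset.prod_insert (by simp only [Finset.mem_insert, Finset.mem_singleton]; omega),
    Finset.prod_insert (by simp only [Finset.mem_insert, Finset.mem_singleton]; omega),
    Finset.prod_insert (by simp only [Finset.mem_singleton]; omega), Finset.prod_singleton]
  ring

lemma icc_top (a b : ℤ) (h : a ≤ b + 1) :
    Finset.Icc a (b + 1) = insert (b + 1) (Finset.Icc a b) := by
  ext m; simp only [Finset.mem_Icc, Finset.mem_insert]; omega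

lemma prodA (x y : ℤ → ℤ) (hx : ∀ i, x i = 0 ∨ x i = 1)
    (hy : ∀ i, y i = f156 (x (i - 1)) (x i) (x (i + 1))) (j : ℤ) :
    ∀ k : ℕ, 2 ≤ k →
      ∏ m ∈ Finset.Icc (j - 2) (j + k - 2), y m = ∏ m ∈ Finset.Icc (j - 2) (j + k - 1), x m := by
  intro k hk
  induction k, hk using Nat.le_induction with
  | base =>
      have E1 : Finset.Icc (j - 2) (j + ((2:ℕ):ℤ) - 2) = Finset.Icc (j - 2) j := by
        congr 1; push_cast; ring
      have E2 : Finset.Icc (j - 2) (j + ((2:ℕ):ℤ) - 1) = Finset.Icc (j - 2) (j + 1) := by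
        congr 1; push_cast; ring
      rw [E1, E2, prod3, prod4]
      have g1 := hy (j - 2)
      rw [show (j:ℤ) - 2 - 1 = j - 3 from by ring, show (j:ℤ) - 2 + 1 = j - 1 from by ring] at g1
      have g2 := hy (j - 1)
      rw [show (j:ℤ) - 1 - 1 = j - 2 from by ring, show (j:ℤ) - 1 + 1 = j from by ring] at g2
      have g3 := hy j
      rw [g1, g2, g3]
      rcases hx (j - 3) with h3 | h3 <;> rcases hx (j - 2) with h4 | h4 <;>
        rcases hx (j - 1) with h5 | h5 <;> rcases hx j with h6 | h6 <;>
        rcases hx (j + 1) with h7 | h7 <;>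
        rw [h3, h4, h5, h6, h7] <;> norm_num [f156]
  | succ k hk ih =>
      have e1 : (j:ℤ) + ((k:ℕ) + 1 : ℕ) - 2 = (j + (k:ℤ) - 2) + 1 := by push_cast; ring
      have e2 : (j:ℤ) + ((k:ℕ) + 1 : ℕ) - 1 = (j + (k:ℤ) - 1) + 1 := by push_cast; ring
      rw [e1, e2, icc_top (j-2) (j + (k:ℤ) - 2) (by omega),
        icc_top (j-2) (j + (k:ℤ) - 1) (by omega),
        Finset.prod_insert (by simp only [Finset.mem_Icc]; omega),
        Finset.prod_insert (by simp only [Finset.mem_Icc]; omega), ih]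
      rw [show j + (k:ℤ) - 2 + 1 = j + (k:ℤ) - 1 from by ring,
        show j + (k:ℤ) - 1 + 1 = j + (k:ℤ) from by ring]
      rcases hx (j + (k:ℤ) - 2) with h | h
      · rw [Finset.prod_eq_zero (i := j + (k:ℤ) - 2)
          (by simp only [Finset.mem_Icc]; omega) h]
        ring
      rcases hx (j + (k:ℤ) - 1) with h' | h'
      · rw [Finset.prod_eq_zero (i := j + (k:ℤ) - 1)
          (by simp only [Finset.mem_Icc]; omega) h']
        ring
      · have g := hy (j + (k:ℤ) - 1)
        rw [show j + (k:ℤ) - 1 - 1 = j + (k:ℤ) - 2 from by ring,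
          show j + (k:ℤ) - 1 + 1 = j + (k:ℤ) from by ring, h, h'] at g
        rw [g]
        simp only [f156]
        ring

theorem stmt13 (x : ℤ → ℤ) (hx : ∀ i, x i = 0 ∨ x i = 1)
    (y : ℤ → ℤ) (hy : ∀ i, y i = f156 (x (i - 1)) (x i) (x (i + 1)))
    (n : ℕ) (hn : 2 ≤ n) (j : ℤ) :
    S2 y n j = S2 x (n + 1) j -
      x (j - 2) * x (j - 1) * x j * (1 - x (j + 1)) * x (j + 2) := by
  unfold S2
  rw [← Finset.sum_add_distrib, ← Finset.sum_add_distrib]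
  have key : ∀ k ∈ Finset.Icc 2 n,
      (Par k * y (j + k) * (1 - y (j + k - 1)) * ∏ m ∈ Finset.Icc (j - 2) (j + k - 2), y m) +
        Par (k + 1) * (1 - y (j + k)) * (1 - y (j + k - 1)) *
          ∏ m ∈ Finset.Icc (j - 2) (j + k - 2), y m
      =
      (Par (k+1) * x (j + ((k+1:ℕ):ℤ)) * (1 - x (j + ((k+1:ℕ):ℤ) - 1)) *
          ∏ m ∈ Finset.Icc (j - 2) (j + ((k+1:ℕ):ℤ) - 2), x m) +
        Par ((k+1) + 1) * (1 - x (j + ((k+1:ℕ):ℤ))) * (1 - x (j + ((k+1:ℕ):ℤ) - 1)) *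
          ∏ m ∈ Finset.Icc (j - 2) (j + ((k+1:ℕ):ℤ) - 2), x m := by
    intro k hk
    simp only [Finset.mem_Icc] at hk
    have hPar : Par (k + 1 + 1) = Par k := by
      simp [Par, Nat.even_add_one, not_not]
    have e3 : (j:ℤ) + ((k+1:ℕ):ℤ) - 2 = j + (k:ℤ) - 1 := by push_cast; ring
    have e2 : (j:ℤ) + ((k+1:ℕ):ℤ) - 1 = j + (k:ℤ) := by push_cast; ring
    have e1 : (j:ℤ) + ((k+1:ℕ):ℤ) = j + (k:ℤ) + 1 := by push_cast; ring
    rw [hPar, e3, e2, e1, prodA x y hx hy j k hk.1]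
    rcases hx (j + (k:ℤ) - 2) with h | h
    · rw [Finset.prod_eq_zero (i := j + (k:ℤ) - 2)
        (by simp only [Finset.mem_Icc]; omega) h]
      ring
    rcases hx (j + (k:ℤ) - 1) with h' | h'
    · rw [Finset.prod_eq_zero (i := j + (k:ℤ) - 1)
        (by simp only [Finset.mem_Icc]; omega) h']
      ring
    · have g := hy (j + (k:ℤ) - 1)
      rw [show j + (k:ℤ) - 1 - 1 = j + (k:ℤ) - 2 from by ring,
        show j + (k:ℤ) - 1 + 1 = j + (k:ℤ) from by ring, h, h'] at g
      have g2 := hy (j + (k:ℤ))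
      rw [show j + (k:ℤ) - 1 = j + (k:ℤ) - 1 from rfl, h'] at g2
      rw [g, g2]
      rcases hx (j + (k:ℤ)) with hb | hb <;> rw [hb] <;> simp only [f156] <;> ring
  rw [Finset.sum_congr rfl key]
  have hmap : Finset.Icc 3 (n + 1) =
      Finset.map (addRightEmbedding 1) (Finset.Icc 2 n) := by
    rw [Finset.map_add_right_Icc]
  have hins : Finset.Icc 2 (n + 1) = insert 2 (Finset.Icc 3 (n + 1)) := by
    ext m; simp only [Finset.mem_Icc, Finset.mem_insert]; omega
  rw [hins, Finset.sum_insert (by simp), hmap, Finset.sum_map]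
  simp only [addRightEmbedding_apply]
  have E : Finset.Icc (j - 2) (j + ((2:ℕ):ℤ) - 2) = Finset.Icc (j - 2) j := by
    congr 1; push_cast; ring
  have h2term :
      Par 2 * x (j + ((2:ℕ):ℤ)) * (1 - x (j + ((2:ℕ):ℤ) - 1)) *
          ∏ m ∈ Finset.Icc (j - 2) (j + ((2:ℕ):ℤ) - 2), x m +
        Par (2 + 1) * (1 - x (j + ((2:ℕ):ℤ))) * (1 - x (j + ((2:ℕ):ℤ) - 1)) *
          ∏ m ∈ Finset.Icc (j - 2) (j + ((2:ℕ):ℤ) - 2), x m =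
      x (j - 2) * x (j - 1) * x j * (1 - x (j + 1)) * x (j + 2) := by
    rw [E, prod3, show (j:ℤ) + ((2:ℕ):ℤ) - 1 = j + 1 from by push_cast; ring,
      show (j:ℤ) + ((2:ℕ):ℤ) = j + 2 from by push_cast; ring]
    simp only [Par, Nat.even_iff]
    norm_num
    ring
  linarith [h2term]
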